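/- Let d, l ≥ 1 be integers and let M ⊆ P([d]) be non-empty. If A is an order-d lattice subset with cov_M(A) ≥ |M|·l, then there exist subsets X₁ ⊆ [n₁], …, X_d ⊆ [n_d], each of size at most l, such that cov_M(A ∩ (X₁×⋯×X_d)) ≥ l. -/
import Mathlib


open Finset

/-- A `B`-subspace of `[n₁]×⋯×[n_d]`: the set of points agreeing with some point `u`
on all coordinates outside `B`. -/
def IsBSubspace {d : ℕ} (n : Fin d → ℕ) (B : Finset (Fin d))
    (S : Set (∀ j, Fin (n j))) : Prop :=
  ∃ u : ∀ j, Fin (n j), S = {x | ∀ j ∉ B, x j = u j}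

/-- An `M`-subspace: a `B`-subspace for some `B ∈ M`. -/
def IsMSubspace {d : ℕ} (n : Fin d → ℕ) (M : Finset (Finset (Fin d)))
    (S : Set (∀ j, Fin (n j))) : Prop :=
  ∃ B ∈ M, IsBSubspace n B S

/-- The `M`-covering number: the least `k` such that `A` is covered by `k` `M`-subspaces. -/
noncomputable def covM {d : ℕ} (n : Fin d → ℕ) (M : Finset (Finset (Fin d)))
    (A : Set (∀ j, Fin (n j))) : ℕ :=
  sInf {k | ∃ S : Fin k → Set (∀ j, Fin (n j)),
    (∀ i, IsMSubspace n M (S i)) ∧ A ⊆ ⋃ i, S i}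

theorem linear_bound_for_lattice_subsets {d l : ℕ} (hd : 0 < d) (hl : 0 < l)
    (n : Fin d → ℕ) (hn : ∀ j, 0 < n j)
    (M : Finset (Finset (Fin d))) (hM : M.Nonempty)
    (A : Set (∀ j, Fin (n j))) (hA : M.card * l ≤ covM n M A) :
    ∃ X : ∀ j, Finset (Fin (n j)), (∀ j, (X j).card ≤ l) ∧
      l ≤ covM n M (A ∩ {x | ∀ j, x j ∈ X j}) := by
  classical
  obtain ⟨B₀, hB₀⟩ := hM
  have hMpos : 0 < M.card := card_pos.mpr ⟨B₀, hB₀⟩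
  -- Extension lemma: given fewer than l points, some point of A avoids all
  -- M-subspaces through them.
  have hext : ∀ t, t < l → ∀ a : ℕ → (∀ j, Fin (n j)),
      ∃ p ∈ A, ∀ i < t, ∀ B ∈ M, ∃ j ∉ B, p j ≠ a i j := by
    intro t ht a
    by_contra hcon
    push_neg at hcon
    -- build a cover of A by t * M.card subspaces
    have hcov : covM n M A ≤ t * M.card := by
      apply Nat.sInf_le
      refine ⟨fun k =>
        {x | ∀ j ∉ (M.equivFin.symm (finProdFinEquiv.symm k).2 : Finset (Fin d)),
          x j = a ((finProdFinEquiv.symm k).1 : ℕ) j}, ?_, ?_⟩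
      · intro k
        exact ⟨_, (M.equivFin.symm (finProdFinEquiv.symm k).2).2, _, rfl⟩
      · intro p hp
        obtain ⟨i, hi, B, hB, hpB⟩ := hcon p hp
        refine Set.mem_iUnion.mpr ⟨finProdFinEquiv (⟨i, hi⟩, M.equivFin ⟨B, hB⟩), ?_⟩
        simp only [Set.mem_setOf_eq, Equiv.symm_apply_apply]
        exact hpB
    have : M.card * l ≤ t * M.card := le_trans hA hcov
    rw [mul_comm] at this
    have : l ≤ t := Nat.le_of_mul_le_mul_right this hMpos
    omega
  -- Build a sequence of l points, no two in a common M-subspace.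
  have hseq : ∀ t, t ≤ l → ∃ a : ℕ → (∀ j, Fin (n j)),
      (∀ i < t, a i ∈ A) ∧
      (∀ i i', i < i' → i' < t → ∀ B ∈ M, ∃ j ∉ B, a i' j ≠ a i j) := by
    intro t
    induction t with
    | zero =>
      exact fun _ => ⟨fun _ j => ⟨0, hn j⟩,
        fun i hi => absurd hi (Nat.not_lt_zero i),
        fun i i' _ hi' => absurd hi' (Nat.not_lt_zero i')⟩
    | succ t ih =>
      intro ht
      obtain ⟨a, ha1, ha2⟩ := ih (by omega)
      obtain ⟨p, hpA, hp⟩ := hext t (by omega) a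
      refine ⟨fun i => if i < t then a i else p, ?_, ?_⟩
      · intro i hi
        by_cases h : i < t
        · simpa [h] using ha1 i h
        · simpa [h] using hpA
      · intro i i' hii' hi' B hB
        by_cases h : i' < t
        · have hi : i < t := lt_trans hii' h
          simpa [h, hi] using ha2 i i' hii' h B hB
        · have hi : i < t := by omega
          simp only [if_pos hi, if_neg h]
          exact hp i hi B hB
  obtain ⟨a, ha1, ha2⟩ := hseq l le_rfl
  refine ⟨fun j => (Finset.range l).image fun i => a i j, ?_, ?_⟩
  · intro j
    exact le_trans card_image_le (by simp)
  · -- points a 0, ..., a (l-1) lie in the window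
    have hmem : ∀ i : Fin l,
        a i ∈ A ∩ {x | ∀ j, x j ∈ (Finset.range l).image fun i => a i j} := by
      intro i
      exact ⟨ha1 i i.isLt, fun j => mem_image.mpr ⟨(i : ℕ), mem_range.mpr i.isLt, rfl⟩⟩
    apply le_csInf
    · -- the covering set is nonempty: cover everything by B₀-subspaces
      refine ⟨Fintype.card (∀ j, Fin (n j)), fun k =>
        {x | ∀ j ∉ B₀, x j = (Fintype.equivFin (∀ j, Fin (n j))).symm k j},
        fun k => ⟨B₀, hB₀, _, rfl⟩, ?_⟩
      intro x _
      refine Set.mem_iUnion.mpr ⟨Fintype.equivFin _ x, ?_⟩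
      intro j hj
      simp
    · intro k hk
      obtain ⟨S, hS1, hS2⟩ := hk
      choose f hf using fun i : Fin l => Set.mem_iUnion.mp (hS2 (hmem i))
      have key : ∀ i i' : Fin l, (i : ℕ) < (i' : ℕ) → f i = f i' → False := by
        intro i i' hlt he
        obtain ⟨B, hB, u, hu⟩ := hS1 (f i)
        have h1 := hf i
        have h2 := hf i'
        rw [← he] at h2
        rw [hu] at h1 h2
        obtain ⟨j, hj, hne⟩ := ha2 (i : ℕ) (i' : ℕ) hlt i'.isLt B hB
        exact hne ((h2 j hj).trans (h1 j hj).symm)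
      have hinj : Function.Injective f := by
        intro i i' he
        rcases Nat.lt_trichotomy (i : ℕ) (i' : ℕ) with h | h | h
        · exact absurd (key i i' h he) not_false
        · exact Fin.ext h
        · exact absurd (key i' i h he.symm) not_false
      simpa using Fintype.card_le_of_injective f hinj
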